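/- Let n ≥ 4, let B = (B',B'') be a partition of {1,…,n} into disjoint sets with #B' ≥ 2 and #B'' ≥ 2, and set b := #B'. Let t : ℚ^P → ℚ^n be the linear map with t(E^{ij}) = (e^i + e^j)/(n−2) − 𝟙/((n−2)(n−1)). Then the image under t of the set {P ∈ ℚ^P : P ≥ 0 and P − E^{B'} ∈ range(deg*)} equals the set { ((b−1)/(n−2))·e^{B'} − ((b−1)·b/(2(n−2)(n−1)))·𝟙 + (s/2)·(e^{B''} − e^{B'}) + v : s ∈ ℚ, 0 ≤ s ≤ 1, v ∈ ℚ^n with deg*(v) ≥ 0 }. (This identifies the polyhedral coefficient Δ_B of the pp-divisor describing the affine cone over Gr(2,n), Proposition 6.2.) -/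

import Mathlib

/-- The index set of the Plücker coordinates: ordered pairs `i < j` in `Fin n`,
representing the 2-element subsets `{i,j}` of `{1,…,n}`. -/
abbrev PluckerPairs (n : ℕ) := {q : Fin n × Fin n // q.1 < q.2}

/-- The weight map `deg* : ℚ^n → ℚ^P`, determined by `deg*(e^i) = Σ_{j ≠ i} E^{ij}`;
equivalently `deg*(v)_{ij} = v_i + v_j`. -/
def degStar (n : ℕ) : (Fin n → ℚ) →ₗ[ℚ] (PluckerPairs n → ℚ) where
  toFun v := fun q => v q.1.1 + v q.1.2
  map_add' u v := by funext q; simp [Pi.add_apply]; ring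
  map_smul' c v := by funext q; simp [Pi.smul_apply, smul_eq_mul]; ring

/-- The basis vector `E^{ij} = E^{ji}` of `ℚ^P` (for `i ≠ j`). -/
def EPair {n : ℕ} (i j : Fin n) : PluckerPairs n → ℚ :=
  fun q => if (q : Fin n × Fin n) = (i, j) ∨ (q : Fin n × Fin n) = (j, i) then 1 else 0

/-- `E^S = Σ_{{i,j} ⊆ S, i ≠ j} E^{ij}`, i.e. the indicator vector of the pairs
contained in `S`. -/
def ESet {n : ℕ} (S : Finset (Fin n)) : PluckerPairs n → ℚ :=
  fun q => if q.1.1 ∈ S ∧ q.1.2 ∈ S then 1 else 0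

/-- `e^S = Σ_{i ∈ S} e^i`, the indicator vector of `S` in `ℚ^n`. -/
def eSet {n : ℕ} (S : Finset (Fin n)) : Fin n → ℚ :=
  fun i => if i ∈ S then 1 else 0

lemma degStar_single (n : ℕ) (k : Fin n) :
    degStar n (Pi.single k 1) = ∑ j ∈ Finset.univ.erase k, EPair k j := by
  funext q
  obtain ⟨⟨i, j⟩, hij⟩ := q
  simp only [degStar, LinearMap.coe_mk, AddHom.coe_mk, Finset.sum_apply, EPair,
    Prod.mk.injEq, Pi.single_apply]
  rcases eq_or_ne i k with rfl | hik
  · rw [if_pos rfl, if_neg (fun h => absurd h (ne_of_gt hij))]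
    rw [Finset.sum_eq_single_of_mem j (Finset.mem_erase.mpr ⟨(ne_of_gt hij), Finset.mem_univ j⟩)]
    · simp
    · intro l hl hlj
      rw [if_neg]
      rintro (⟨-, rfl⟩ | ⟨rfl, rfl⟩)
      · exact hlj rfl
      · exact absurd rfl (ne_of_gt hij)
  · rw [if_neg hik]
    rcases eq_or_ne j k with rfl | hjk
    · rw [if_pos rfl]
      rw [Finset.sum_eq_single_of_mem i (Finset.mem_erase.mpr ⟨(ne_of_lt hij), Finset.mem_univ i⟩)]
      · simp [hik]
      · intro l hl hli
        rw [if_neg]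
        rintro (⟨rfl, rfl⟩ | ⟨rfl, -⟩)
        · exact hik rfl
        · exact hli rfl
    · rw [if_neg hjk]
      have hz : (∑ l ∈ Finset.univ.erase k,
          if (i = k ∧ j = l) ∨ (i = l ∧ j = k) then (1:ℚ) else 0) = 0 := by
        refine Finset.sum_eq_zero fun l hl => ?_
        rw [if_neg]
        rintro (⟨rfl, rfl⟩ | ⟨rfl, rfl⟩)
        · exact hik rfl
        · exact hjk rfl
      rw [hz]
      norm_num

lemma t_degStar (n : ℕ) (hn : 4 ≤ n)
    (t : (PluckerPairs n → ℚ) →ₗ[ℚ] (Fin n → ℚ))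
    (ht : ∀ i j : Fin n, i ≠ j →
      t (EPair i j) = ((n : ℚ) - 2)⁻¹ • (Pi.single i 1 + Pi.single j 1)
        - (((n : ℚ) - 2) * ((n : ℚ) - 1))⁻¹ • (fun _ : Fin n => (1 : ℚ)))
    (w : Fin n → ℚ) : t (degStar n w) = w := by
  have hn2 : ((n : ℚ) - 2) ≠ 0 := by
    have : (4:ℚ) ≤ (n:ℚ) := by exact_mod_cast hn
    linarith
  have hn1 : ((n : ℚ) - 1) ≠ 0 := by
    have : (4:ℚ) ≤ (n:ℚ) := by exact_mod_cast hn
    linarith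
  have key : ∀ k, t (degStar n (Pi.single k 1)) = Pi.single k 1 := by
    intro k
    rw [degStar_single, map_sum]
    rw [Finset.sum_congr rfl
      (fun j hj => ht k j (Ne.symm (Finset.ne_of_mem_erase hj)))]
    funext m
    simp only [Finset.sum_apply, Pi.sub_apply, Pi.smul_apply, Pi.add_apply,
      Pi.single_apply, smul_eq_mul]
    have hsum : ∑ j ∈ Finset.univ.erase k, (if m = j then (1:ℚ) else 0)
        = if m ∈ Finset.univ.erase k then (1:ℚ) else 0 := Finset.sum_ite_eq _ _ _
    have hcard : ((Finset.univ.erase k).card : ℚ) = (n : ℚ) - 1 := by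
      rw [Finset.card_erase_of_mem (Finset.mem_univ k), Finset.card_univ, Fintype.card_fin]
      have : 1 ≤ n := by omega
      push_cast [Nat.cast_sub this]
      ring
    have expand : ∀ x ∈ Finset.univ.erase k,
        ((n:ℚ) - 2)⁻¹ * ((if m = k then (1:ℚ) else 0) + if m = x then 1 else 0)
          - ((n:ℚ) - 2)⁻¹ * ((n:ℚ) - 1)⁻¹
        = (((n:ℚ) - 2)⁻¹ * (if m = k then (1:ℚ) else 0) - ((n:ℚ)-2)⁻¹ * ((n:ℚ)-1)⁻¹)
          + ((n:ℚ) - 2)⁻¹ * (if m = x then 1 else 0) := fun x _ => by ring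
    have expand0 : ∀ x ∈ Finset.univ.erase k,
        ((n:ℚ) - 2)⁻¹ * ((if m = k then (1:ℚ) else 0) + if m = x then 1 else 0)
          - (((n:ℚ) - 2) * ((n:ℚ) - 1))⁻¹ * 1
        = ((n:ℚ) - 2)⁻¹ * ((if m = k then (1:ℚ) else 0) + if m = x then 1 else 0)
          - ((n:ℚ) - 2)⁻¹ * ((n:ℚ) - 1)⁻¹ := fun x _ => by
      rw [mul_inv]; ring
    rw [Finset.sum_congr rfl expand0, Finset.sum_congr rfl expand,
      Finset.sum_add_distrib, Finset.sum_const, ← Finset.mul_sum, hsum, nsmul_eq_mul, hcard]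
    rcases eq_or_ne m k with rfl | hmk
    · simp only [if_pos rfl, Finset.mem_erase, ne_eq, not_true_eq_false, false_and, if_false, ↓reduceIte]
      field_simp
      ring
    · rw [if_neg hmk, if_pos (Finset.mem_erase.mpr ⟨hmk, Finset.mem_univ m⟩)]
      field_simp
      ring
  have hone : ∀ k, t (degStar n (Pi.single k (w k))) = Pi.single k (w k) := by
    intro k
    have h1 : (Pi.single k (w k) : Fin n → ℚ) = w k • (Pi.single k (1:ℚ) : Fin n → ℚ) := by
      funext i
      simp only [Pi.smul_apply, Pi.single_apply, smul_eq_mul]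
      split <;> ring
    rw [h1, map_smul, map_smul, key]
  conv_lhs => rw [← Finset.univ_sum_single w]
  rw [map_sum, map_sum, Finset.sum_congr rfl (fun k _ => hone k), Finset.univ_sum_single]

lemma ESet_eq {n : ℕ} (S : Finset (Fin n)) :
    ESet S = (2:ℚ)⁻¹ • ∑ i ∈ S, ∑ j ∈ S.erase i, EPair i j := by
  funext q
  obtain ⟨⟨a, b⟩, hab⟩ := q
  simp only [ESet, Pi.smul_apply, Finset.sum_apply, EPair, Prod.mk.injEq, smul_eq_mul]
  by_cases hmem : a ∈ S ∧ b ∈ S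
  · obtain ⟨ha, hb⟩ := hmem
    rw [if_pos ⟨ha, hb⟩]
    have hsub : ({a, b} : Finset (Fin n)) ⊆ S := by
      intro x hx
      rcases Finset.mem_insert.mp hx with rfl | hx
      · exact ha
      · rw [Finset.mem_singleton.mp hx]; exact hb
    rw [← Finset.sum_subset hsub]
    · rw [Finset.sum_pair (ne_of_lt hab)]
      have h1 : (∑ j ∈ S.erase a, if (a = a ∧ b = j) ∨ (a = j ∧ b = a) then (1:ℚ) else 0)
          = 1 := by
        rw [Finset.sum_eq_single_of_mem b
          (Finset.mem_erase.mpr ⟨(ne_of_gt hab), hb⟩)]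
        · simp
        · intro l hl hlb
          rw [if_neg]
          rintro (⟨-, rfl⟩ | ⟨rfl, rfl⟩)
          · exact hlb rfl
          · exact absurd rfl (ne_of_gt hab)
      have h2 : (∑ j ∈ S.erase b, if (a = b ∧ b = j) ∨ (a = j ∧ b = b) then (1:ℚ) else 0)
          = 1 := by
        rw [Finset.sum_eq_single_of_mem a
          (Finset.mem_erase.mpr ⟨(ne_of_lt hab), ha⟩)]
        · simp [ne_of_lt hab]
        · intro l hl hla
          rw [if_neg]
          rintro (⟨rfl, rfl⟩ | ⟨rfl, -⟩)
          · exact absurd rfl (ne_of_lt hab)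
          · exact hla rfl
      rw [h1, h2]
      norm_num
    · intro i hi hinotin
      refine Finset.sum_eq_zero fun j hj => ?_
      rw [if_neg]
      rintro (⟨rfl, rfl⟩ | ⟨rfl, rfl⟩)
      · exact hinotin (Finset.mem_insert_self _ _)
      · exact hinotin (Finset.mem_insert.mpr (Or.inr (Finset.mem_singleton_self _)))
  · rw [if_neg hmem]
    have hz : (∑ i ∈ S, ∑ j ∈ S.erase i, if (a = i ∧ b = j) ∨ (a = j ∧ b = i)
        then (1:ℚ) else 0) = 0 := by
      refine Finset.sum_eq_zero fun i hi => Finset.sum_eq_zero fun j hj => ?_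
      rw [if_neg]
      rintro (⟨rfl, rfl⟩ | ⟨rfl, rfl⟩)
      · exact hmem ⟨hi, Finset.mem_of_mem_erase hj⟩
      · exact hmem ⟨Finset.mem_of_mem_erase hj, hi⟩
    rw [hz, mul_zero]

lemma t_ESet (n : ℕ) (hn : 4 ≤ n)
    (t : (PluckerPairs n → ℚ) →ₗ[ℚ] (Fin n → ℚ))
    (ht : ∀ i j : Fin n, i ≠ j →
      t (EPair i j) = ((n : ℚ) - 2)⁻¹ • (Pi.single i 1 + Pi.single j 1)
        - (((n : ℚ) - 2) * ((n : ℚ) - 1))⁻¹ • (fun _ : Fin n => (1 : ℚ)))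
    (S : Finset (Fin n)) (hS : 1 ≤ S.card) :
    t (ESet S) = (((S.card : ℚ) - 1) / ((n : ℚ) - 2)) • eSet S
      - ((((S.card : ℚ) - 1) * (S.card : ℚ))
          / (2 * ((n : ℚ) - 2) * ((n : ℚ) - 1))) • (fun _ : Fin n => (1 : ℚ)) := by
  have hn2 : ((n : ℚ) - 2) ≠ 0 := by
    have : (4:ℚ) ≤ (n:ℚ) := by exact_mod_cast hn
    linarith
  have hn1 : ((n : ℚ) - 1) ≠ 0 := by
    have : (4:ℚ) ≤ (n:ℚ) := by exact_mod_cast hn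
    linarith
  rw [ESet_eq, map_smul, map_sum]
  rw [Finset.sum_congr rfl (fun i hi => map_sum t _ (S.erase i))]
  rw [Finset.sum_congr rfl (fun i hi => Finset.sum_congr rfl
    (fun j hj => ht i j (Ne.symm (Finset.ne_of_mem_erase hj))))]
  funext m
  simp only [Pi.smul_apply, Finset.sum_apply, Pi.sub_apply, Pi.add_apply,
    Pi.single_apply, smul_eq_mul, eSet]
  have hinner : ∀ i ∈ S,
      (∑ j ∈ S.erase i, (((n:ℚ) - 2)⁻¹ * ((if m = i then (1:ℚ) else 0) + if m = j then 1 else 0)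
        - (((n:ℚ) - 2) * ((n:ℚ) - 1))⁻¹ * 1))
      = ((S.card : ℚ) - 1) * (((n:ℚ) - 2)⁻¹ * (if m = i then (1:ℚ) else 0)
          - (((n:ℚ) - 2) * ((n:ℚ) - 1))⁻¹)
        + ((n:ℚ) - 2)⁻¹ * (if m ∈ S.erase i then (1:ℚ) else 0) := by
    intro i hi
    have hsum : ∑ j ∈ S.erase i, (if m = j then (1:ℚ) else 0)
        = if m ∈ S.erase i then (1:ℚ) else 0 := Finset.sum_ite_eq _ _ _
    have hcard : ((S.erase i).card : ℚ) = (S.card : ℚ) - 1 := by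
      rw [Finset.card_erase_of_mem hi]
      push_cast [Nat.cast_sub hS]
      ring
    have expand : ∀ j ∈ S.erase i,
        (((n:ℚ) - 2)⁻¹ * ((if m = i then (1:ℚ) else 0) + if m = j then 1 else 0)
          - (((n:ℚ) - 2) * ((n:ℚ) - 1))⁻¹ * 1)
        = (((n:ℚ) - 2)⁻¹ * (if m = i then (1:ℚ) else 0)
            - (((n:ℚ) - 2) * ((n:ℚ) - 1))⁻¹)
          + ((n:ℚ) - 2)⁻¹ * (if m = j then (1:ℚ) else 0) := fun j _ => by ring
    rw [Finset.sum_congr rfl expand, Finset.sum_add_distrib, Finset.sum_const,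
      ← Finset.mul_sum, hsum, nsmul_eq_mul, hcard]
  rw [Finset.sum_congr rfl hinner, Finset.sum_add_distrib, ← Finset.mul_sum, ← Finset.mul_sum]
  have hsum1 : ∑ i ∈ S, (((n:ℚ) - 2)⁻¹ * (if m = i then (1:ℚ) else 0)
      - (((n:ℚ) - 2) * ((n:ℚ) - 1))⁻¹)
      = ((n:ℚ) - 2)⁻¹ * (if m ∈ S then (1:ℚ) else 0)
        - (S.card : ℚ) * (((n:ℚ) - 2) * ((n:ℚ) - 1))⁻¹ := by
    rw [Finset.sum_sub_distrib, ← Finset.mul_sum, Finset.sum_ite_eq, Finset.sum_const,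
      nsmul_eq_mul]
  have hsum2 : ∑ i ∈ S, (if m ∈ S.erase i then (1:ℚ) else 0)
      = (if m ∈ S then (1:ℚ) else 0) * ((S.card : ℚ) - 1) := by
    by_cases hm : m ∈ S
    · rw [if_pos hm]
      have : ∀ i ∈ S, (if m ∈ S.erase i then (1:ℚ) else 0)
          = if i = m then 0 else 1 := by
        intro i hi
        by_cases him : i = m
        · subst him; simp
        · rw [if_pos (Finset.mem_erase.mpr ⟨Ne.symm him, hm⟩), if_neg him]
      rw [Finset.sum_congr rfl this]
      have h2 : ∀ i ∈ S, (if i = m then (0:ℚ) else 1) = 1 - (if i = m then 1 else 0) := by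
        intro i _; split <;> ring
      rw [Finset.sum_congr rfl h2, Finset.sum_sub_distrib, Finset.sum_const,
        Finset.sum_ite_eq' S m (fun _ => (1:ℚ)), if_pos hm, nsmul_eq_mul]
      ring
    · rw [if_neg hm, Finset.sum_eq_zero, zero_mul]
      intro i hi
      rw [if_neg]
      intro hmem
      exact hm (Finset.mem_of_mem_erase hmem)
  rw [hsum1, hsum2]
  by_cases hm : m ∈ S
  · simp only [if_pos hm, div_eq_mul_inv, mul_inv]
    ring
  · simp only [if_neg hm, div_eq_mul_inv, mul_inv]
    ring

/-- Proposition 6.2: the image under the canonical retraction `t` of the positive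
fiber `π^{-1}(c^B) ∩ ℚ^P_{≥0}` is the polyhedral coefficient
`Δ_B = ((b−1)/(n−2))·e^{B'} − ((b−1)b/(2(n−2)(n−1)))·𝟙 + ½·[0, e^{B''}−e^{B'}] + σ`
of the pp-divisor describing the affine cone over `Gr(2,n)`. -/
theorem image_of_positive_fiber
    (n : ℕ) (hn : 4 ≤ n) (B' B'' : Finset (Fin n))
    (hdisj : Disjoint B' B'') (hcover : B' ∪ B'' = Finset.univ)
    (hB' : 2 ≤ B'.card) (hB'' : 2 ≤ B''.card)
    (t : (PluckerPairs n → ℚ) →ₗ[ℚ] (Fin n → ℚ))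
    (ht : ∀ i j : Fin n, i ≠ j →
      t (EPair i j) = ((n : ℚ) - 2)⁻¹ • (Pi.single i 1 + Pi.single j 1)
        - (((n : ℚ) - 2) * ((n : ℚ) - 1))⁻¹ • (fun _ : Fin n => (1 : ℚ))) :
    ⇑t '' {P : PluckerPairs n → ℚ |
        (∀ q, 0 ≤ P q) ∧ P - ESet B' ∈ Set.range (degStar n)} =
      {x : Fin n → ℚ | ∃ s : ℚ, ∃ v : Fin n → ℚ,
        0 ≤ s ∧ s ≤ 1 ∧ (∀ q, 0 ≤ degStar n v q) ∧
        x = (((B'.card : ℚ) - 1) / ((n : ℚ) - 2)) • eSet B'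
          - ((((B'.card : ℚ) - 1) * (B'.card : ℚ))
              / (2 * ((n : ℚ) - 2) * ((n : ℚ) - 1))) • (fun _ : Fin n => (1 : ℚ))
          + (s / 2) • (eSet B'' - eSet B') + v} := by
  have hB'1 : 1 ≤ B'.card := le_trans one_le_two hB'
  have hmem : ∀ i : Fin n, (i ∈ B' ∧ i ∉ B'') ∨ (i ∉ B' ∧ i ∈ B'') := by
    intro i
    have hi : i ∈ B' ∪ B'' := hcover ▸ Finset.mem_univ i
    rcases Finset.mem_union.mp hi with h | h
    · exact Or.inl ⟨h, Finset.disjoint_left.mp hdisj h⟩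
    · exact Or.inr ⟨fun h' => Finset.disjoint_left.mp hdisj h' h, h⟩
  ext x
  simp only [Set.mem_image, Set.mem_setOf_eq]
  constructor
  · rintro ⟨P, ⟨hpos, w, hw⟩, rfl⟩
    have hP : P = ESet B' + degStar n w := by
      rw [hw]
      funext q
      simp only [Pi.add_apply, Pi.sub_apply]
      ring
    have key2 : ∀ i j : Fin n, i ≠ j →
        0 ≤ (if i ∈ B' ∧ j ∈ B' then (1:ℚ) else 0) + (w i + w j) := by
      intro i j hij
      rcases lt_or_gt_of_ne hij with h | h
      · have hq := hpos ⟨(i, j), h⟩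
        rw [hP] at hq
        simpa [ESet, degStar] using hq
      · have hq := hpos ⟨(j, i), h⟩
        rw [hP] at hq
        have hq' : 0 ≤ (if j ∈ B' ∧ i ∈ B' then (1:ℚ) else 0) + (w j + w i) := by
          simpa [ESet, degStar] using hq
        have hiff : (if i ∈ B' ∧ j ∈ B' then (1:ℚ) else 0)
            = (if j ∈ B' ∧ i ∈ B' then (1:ℚ) else 0) := if_congr and_comm rfl rfl
        rw [hiff]
        linarith
    obtain ⟨a, ha, b2, hb2, hab⟩ := Finset.one_lt_card.mp hB'
    have hne : (B'.offDiag).Nonempty := ⟨(a, b2), Finset.mem_offDiag.mpr ⟨ha, hb2, hab⟩⟩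
    set X : ℚ := B'.offDiag.inf' hne (fun p => w p.1 + w p.2) with hX
    refine ⟨max 0 (-X), w + ((max 0 (-X))/2) • (eSet B' - eSet B''),
      le_max_left _ _, ?_, ?_, ?_⟩
    · refine max_le (by norm_num) ?_
      have hX1 : -1 ≤ X := by
        refine Finset.le_inf' hne _ fun p hp => ?_
        obtain ⟨hp1, hp2, hp12⟩ := Finset.mem_offDiag.mp hp
        have := key2 p.1 p.2 hp12
        rw [if_pos ⟨hp1, hp2⟩] at this
        linarith
      linarith
    · intro q
      obtain ⟨⟨i, j⟩, hij⟩ := q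
      have hij' : i ≠ j := ne_of_lt hij
      simp only [degStar, LinearMap.coe_mk, AddHom.coe_mk, Pi.add_apply, Pi.smul_apply,
        Pi.sub_apply, eSet, smul_eq_mul]
      rcases hmem i with ⟨hi1, hi2⟩ | ⟨hi1, hi2⟩ <;>
        rcases hmem j with ⟨hj1, hj2⟩ | ⟨hj1, hj2⟩
      · simp only [if_pos hi1, if_neg hi2, if_pos hj1, if_neg hj2]
        have hmemq : ((i, j) : Fin n × Fin n) ∈ B'.offDiag :=
          Finset.mem_offDiag.mpr ⟨hi1, hj1, hij'⟩
        have h1 : X ≤ w i + w j := Finset.inf'_le _ hmemq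
        have h2 : -X ≤ max 0 (-X) := le_max_right _ _
        have h3 : (0:ℚ) ≤ max 0 (-X) := le_max_left _ _
        linarith
      · simp only [if_pos hi1, if_neg hi2, if_neg hj1, if_pos hj2]
        have := key2 i j hij'
        rw [if_neg (fun h => hj1 h.2)] at this
        linarith
      · simp only [if_neg hi1, if_pos hi2, if_pos hj1, if_neg hj2]
        have := key2 i j hij'
        rw [if_neg (fun h => hi1 h.1)] at this
        linarith
      · simp only [if_neg hi1, if_pos hi2, if_neg hj1, if_pos hj2]
        have h0 : 0 ≤ w i + w j := by
          have := key2 i j hij'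
          rw [if_neg (fun h => hi1 h.1)] at this
          linarith
        have hXle : -X ≤ w i + w j := by
          obtain ⟨p, hp, hpX⟩ := Finset.exists_mem_eq_inf' hne (fun p => w p.1 + w p.2)
          obtain ⟨hp1, hp2, hp12⟩ := Finset.mem_offDiag.mp hp
          have e1 := key2 p.1 i (fun h => hi1 (h ▸ hp1))
          have e2 := key2 p.2 j (fun h => hj1 (h ▸ hp2))
          rw [if_neg (fun h => hi1 h.2)] at e1
          rw [if_neg (fun h => hj1 h.2)] at e2
          rw [hX, hpX]
          linarith
        have hs : max 0 (-X) ≤ w i + w j := max_le h0 hXle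
        linarith
    · have hTP : t P = (((B'.card:ℚ)-1)/((n:ℚ)-2)) • eSet B'
          - ((((B'.card:ℚ)-1)*(B'.card:ℚ))/(2*((n:ℚ)-2)*((n:ℚ)-1)))
            • (fun _ : Fin n => (1:ℚ)) + w := by
        rw [hP, map_add, t_ESet n hn t ht B' hB'1, t_degStar n hn t ht w]
      rw [hTP]
      funext m
      simp only [Pi.add_apply, Pi.sub_apply, Pi.smul_apply, eSet, smul_eq_mul]
      ring
  · rintro ⟨s, v, hs0, hs1, hv, rfl⟩
    set w : Fin n → ℚ := (s/2) • (eSet B'' - eSet B') + v with hwdef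
    refine ⟨ESet B' + degStar n w, ⟨?_, ⟨w, ?_⟩⟩, ?_⟩
    · intro q
      obtain ⟨⟨i, j⟩, hij⟩ := q
      have hvq := hv ⟨(i, j), hij⟩
      simp only [degStar, LinearMap.coe_mk, AddHom.coe_mk] at hvq
      simp only [Pi.add_apply, ESet, degStar, LinearMap.coe_mk, AddHom.coe_mk, hwdef,
        Pi.smul_apply, Pi.sub_apply, eSet, smul_eq_mul]
      rcases hmem i with ⟨hi1, hi2⟩ | ⟨hi1, hi2⟩ <;>
        rcases hmem j with ⟨hj1, hj2⟩ | ⟨hj1, hj2⟩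
      · rw [if_pos ⟨hi1, hj1⟩]
        simp only [if_pos hi1, if_neg hi2, if_pos hj1, if_neg hj2]
        linarith
      · rw [if_neg (fun h => hj1 h.2)]
        simp only [if_pos hi1, if_neg hi2, if_neg hj1, if_pos hj2]
        linarith
      · rw [if_neg (fun h => hi1 h.1)]
        simp only [if_neg hi1, if_pos hi2, if_pos hj1, if_neg hj2]
        linarith
      · rw [if_neg (fun h => hi1 h.1)]
        simp only [if_neg hi1, if_pos hi2, if_neg hj1, if_pos hj2]
        linarith
    · funext q
      simp only [Pi.sub_apply, Pi.add_apply]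
      ring
    · rw [map_add, t_ESet n hn t ht B' hB'1, t_degStar n hn t ht w]
      funext m
      simp only [Pi.add_apply, Pi.sub_apply, Pi.smul_apply, eSet, smul_eq_mul, hwdef]
      ring
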